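/- Let d ∈ {3, 4, 5}, fix G ∈ [0, 1/2], and set x := √(1 − (1 − 2G)²). Define ω : Fin d × Fin d → ℝ by ω_{00} = ω_{(d−1)(d−1)} = (1 + x)/4, ω_{0(d−1)} = ω_{(d−1)0} = (1 − x)/4, and ω_{ln} = 0 otherwise. Then ω is a valid probability weight (nonnegative entries summing to 1), g_d(ω) = G, and Q(ω) = 8(1 + x) = 8(1 + √(1 − (1 − 2G)²)). (This is the optimal two-qudit probe |ψ^o_{2,d}(G)⟩ at fixed GGM G.) -/

import Mathlib

open Matrix

/-- Rescaled, equally spaced eigenvalues `η̄_j = (2j − (d−1))/(d−1) ∈ [−1, 1]` of the local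
rescaled spin-z operator `Z̄_d`. -/
noncomputable def etabar (d : ℕ) (j : Fin d) : ℝ :=
  (2 * (j : ℝ) - ((d : ℝ) - 1)) / ((d : ℝ) - 1)

/-- Quantum Fisher information of the two-qudit probe `|ψ⟩ = Σ_{l,n} √ω_{ln} |l n⟩` under
the generator `h = Z̄_d⊗I + I⊗Z̄_d`:
`Q(ω) = 4[Σ ω_{ln}(η̄_l + η̄_n)² − (Σ ω_{ln}(η̄_l + η̄_n))²]`. -/
noncomputable def QFId (d : ℕ) (ω : Fin d × Fin d → ℝ) : ℝ :=
  4 * ((∑ l, ∑ n, ω (l, n) * (etabar d l + etabar d n) ^ 2) -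
    (∑ l, ∑ n, ω (l, n) * (etabar d l + etabar d n)) ^ 2)

/-- The matrix of coefficients `A_{ln} = √ω_{ln}` of the probe. -/
noncomputable def Amat (d : ℕ) (ω : Fin d × Fin d → ℝ) : Matrix (Fin d) (Fin d) ℝ :=
  Matrix.of fun l n => Real.sqrt (ω (l, n))

/-- The Gram matrix `AᵀA` is real symmetric (Hermitian). -/
theorem gram_isHermitian (d : ℕ) (ω : Fin d × Fin d → ℝ) :
    ((Amat d ω)ᵀ * Amat d ω).IsHermitian := by
  rw [← Matrix.conjTranspose_eq_transpose_of_trivial]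
  exact Matrix.isHermitian_conjTranspose_mul_self _

/-- The eigenvalues of `AᵀA` (the squared Schmidt coefficients of the probe). -/
noncomputable def gramEig (d : ℕ) (ω : Fin d × Fin d → ℝ) : Fin d → ℝ :=
  (gram_isHermitian d ω).eigenvalues

/-- Generalized geometric measure `g_d(ω) = 1 − λ_max(AᵀA)`. -/
noncomputable def GGMd (d : ℕ) (ω : Fin d × Fin d → ℝ) : ℝ :=
  1 - ⨆ i, gramEig d ω i

/-- Von Neumann entanglement entropy `S_d(ω) = −Σ_i λ_i log₂ λ_i`, where the `λ_i` are the
eigenvalues of `AᵀA` (with `0 log₂ 0 = 0`, automatic since `Real.logb 2 0 = 0`). -/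
noncomputable def entEntropyd (d : ℕ) (ω : Fin d × Fin d → ℝ) : ℝ :=
  -∑ i, gramEig d ω i * Real.logb 2 (gramEig d ω i)

/-- Binary entropy `H(p) = −p log₂ p − (1−p) log₂ (1−p)`. -/
noncomputable def binEnt (p : ℝ) : ℝ :=
  -(p * Real.logb 2 p) - (1 - p) * Real.logb 2 (1 - p)


private lemma amat_eq (d : ℕ) (i0 i1 : Fin d) (hne : i0 ≠ i1) (c₁ c₂ : ℝ)
    (ω : Fin d × Fin d → ℝ)
    (hω' : ∀ l n : Fin d, ω (l, n) =
      if (l = i0 ∧ n = i0) ∨ (l = i1 ∧ n = i1) then c₁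
      else if (l = i0 ∧ n = i1) ∨ (l = i1 ∧ n = i0) then c₂ else 0) :
    Amat d ω = Real.sqrt c₁ • (Matrix.single i0 i0 (1:ℝ) + Matrix.single i1 i1 1)
      + Real.sqrt c₂ • (Matrix.single i0 i1 1 + Matrix.single i1 i0 1) := by
  ext l n
  simp only [Amat, Matrix.of_apply, hω' l n, Matrix.add_apply, Matrix.smul_apply,
    Matrix.single, smul_eq_mul]
  by_cases h0 : l = i0 <;> by_cases h1 : l = i1 <;>
    by_cases h2 : n = i0 <;> by_cases h3 : n = i1 <;>
    simp_all [hne, hne.symm, Real.sqrt_zero, eq_comm]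

private lemma gram_eq (d : ℕ) (i0 i1 : Fin d) (hne : i0 ≠ i1) (a b p q : ℝ)
    (hpa : a * a + b * b = p) (hqb : a * b + b * a = q)
    (A : Matrix (Fin d) (Fin d) ℝ)
    (hA : A = a • (Matrix.single i0 i0 (1:ℝ) + Matrix.single i1 i1 1)
      + b • (Matrix.single i0 i1 1 + Matrix.single i1 i0 1)) :
    Aᵀ * A = p • (Matrix.single i0 i0 (1:ℝ) + Matrix.single i1 i1 1)
      + q • (Matrix.single i0 i1 1 + Matrix.single i1 i0 1) := by
  have htr : ∀ i j : Fin d, (Matrix.single i j (1:ℝ))ᵀ = Matrix.single j i 1 := by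
    intro i j; ext l n; simp [Matrix.transpose_apply, Matrix.single, and_comm]
  subst hA
  simp only [Matrix.transpose_add, Matrix.transpose_smul, htr, add_mul, mul_add,
    Matrix.smul_mul, Matrix.mul_smul, Matrix.single_mul_single_same,
    Matrix.single_mul_single_of_ne, ne_eq, hne, hne.symm, not_false_eq_true,
    mul_one, smul_zero, add_zero, zero_add, smul_smul]
  match_scalars <;>
    first
      | linear_combination hpa
      | linear_combination hqb
      | linear_combination hpa + hqb
      | linear_combination hpa - hqb
      | linear_combination hqb - hpa

private lemma cubic_eq (d : ℕ) (i0 i1 : Fin d) (hne : i0 ≠ i1) (G : ℝ)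
    (M : Matrix (Fin d) (Fin d) ℝ)
    (hM : M = ((1:ℝ)/2) • (Matrix.single i0 i0 (1:ℝ) + Matrix.single i1 i1 1)
      + ((1 - 2*G)/2) • (Matrix.single i0 i1 1 + Matrix.single i1 i0 1)) :
    M * M * M = M * M - (G * (1 - G)) • M := by
  subst hM
  simp only [add_mul, mul_add, Matrix.smul_mul, Matrix.mul_smul,
    Matrix.single_mul_single_same, Matrix.single_mul_single_of_ne, ne_eq, hne, hne.symm,
    not_false_eq_true, mul_one, smul_zero, add_zero, zero_add, smul_smul]
  match_scalars <;> ring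

private lemma mulvec_top (d : ℕ) (i0 i1 : Fin d) (hne : i0 ≠ i1) (G : ℝ)
    (M : Matrix (Fin d) (Fin d) ℝ)
    (hM : M = ((1:ℝ)/2) • (Matrix.single i0 i0 (1:ℝ) + Matrix.single i1 i1 1)
      + ((1 - 2*G)/2) • (Matrix.single i0 i1 1 + Matrix.single i1 i0 1)) :
    M *ᵥ (Pi.single i0 1 + Pi.single i1 1)
      = (1 - G) • (Pi.single i0 1 + Pi.single i1 1) := by
  subst hM
  funext j
  simp only [Matrix.mulVec_add, Matrix.mulVec_single, Pi.add_apply, Matrix.add_apply,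
    Matrix.smul_apply, Matrix.single, Matrix.of_apply, smul_eq_mul, mul_one,
    Pi.smul_apply, Pi.single_apply]
  by_cases hj0 : i0 = j <;> by_cases hj1 : i1 = j
  · exact absurd (hj0.trans hj1.symm) hne
  · simp [hj0, hj1, hne, hne.symm, eq_comm]; ring
  · simp [hj0, hj1, hne, hne.symm, eq_comm]; ring
  · simp [hj0, hj1, hne, hne.symm, eq_comm]

set_option maxHeartbeats 2000000 in
/-- For `d ∈ {3, 4, 5}`, `G ∈ [0, 1/2]` and `x = √(1 − (1 − 2G)²)`, the
weight `ω` with `ω_{00} = ω_{(d−1)(d−1)} = (1+x)/4`, `ω_{0(d−1)} = ω_{(d−1)0} = (1−x)/4`,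
and all other entries `0` is a valid probability weight with `g_d(ω) = G` and
`Q(ω) = 8(1 + x)`. (The optimal two-qudit probe at fixed GGM `G`.) -/
theorem optimal_probe_fixed_ggm_two_qudits (d : ℕ) (hd : d = 3 ∨ d = 4 ∨ d = 5) (G x : ℝ)
    (hG : G ∈ Set.Icc (0 : ℝ) (1 / 2)) (hx : x = Real.sqrt (1 - (1 - 2 * G) ^ 2))
    (ω : Fin d × Fin d → ℝ)
    (hω : ∀ l n : Fin d, ω (l, n) =
      if ((l : ℕ) = 0 ∧ (n : ℕ) = 0) ∨ ((l : ℕ) = d - 1 ∧ (n : ℕ) = d - 1) then (1 + x) / 4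
      else if ((l : ℕ) = 0 ∧ (n : ℕ) = d - 1) ∨ ((l : ℕ) = d - 1 ∧ (n : ℕ) = 0) then
        (1 - x) / 4
      else 0) :
    (∀ p, 0 ≤ ω p) ∧ (∑ p, ω p) = 1 ∧ GGMd d ω = G ∧
      QFId d ω = 8 * (1 + x) ∧
      QFId d ω = 8 * (1 + Real.sqrt (1 - (1 - 2 * G) ^ 2)) := by
  classical
  have hd3 : 3 ≤ d := by rcases hd with h | h | h <;> omega
  obtain ⟨hG0, hG2⟩ := hG
  have harg : 0 ≤ 1 - (1 - 2*G)^2 := by nlinarith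
  have hx0 : 0 ≤ x := hx ▸ Real.sqrt_nonneg _
  have hx2 : x^2 = 1 - (1 - 2*G)^2 := by rw [hx]; exact Real.sq_sqrt harg
  have hx1 : x ≤ 1 := by nlinarith
  obtain ⟨i0, hi0⟩ : ∃ i : Fin d, (i : ℕ) = 0 := ⟨⟨0, by omega⟩, rfl⟩
  obtain ⟨i1, hi1⟩ : ∃ i : Fin d, (i : ℕ) = d - 1 := ⟨⟨d - 1, by omega⟩, rfl⟩
  have hne : i0 ≠ i1 := by
    intro h; rw [h, hi1] at hi0; omega
  -- pointwise description of ω in terms of i0, i1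
  have hω' : ∀ l n : Fin d, ω (l, n) =
      if (l = i0 ∧ n = i0) ∨ (l = i1 ∧ n = i1) then (1 + x) / 4
      else if (l = i0 ∧ n = i1) ∨ (l = i1 ∧ n = i0) then (1 - x) / 4 else 0 := by
    intro l n
    have e0 : ∀ m : Fin d, (m : ℕ) = 0 ↔ m = i0 := by
      intro m; rw [Fin.ext_iff, hi0]
    have e1 : ∀ m : Fin d, (m : ℕ) = d - 1 ↔ m = i1 := by
      intro m; rw [Fin.ext_iff, hi1]
    rw [hω l n]
    simp only [e0, e1]
  -- nonnegativity
  have hnn : ∀ p, 0 ≤ ω p := by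
    rintro ⟨l, n⟩
    rw [hω' l n]
    split_ifs <;> nlinarith
  -- the support finset
  have hzero : ∀ p : Fin d × Fin d,
      p ∉ ({(i0, i0), (i0, i1), (i1, i0), (i1, i1)} : Finset (Fin d × Fin d)) → ω p = 0 := by
    rintro ⟨l, n⟩ hp
    simp only [Finset.mem_insert, Finset.mem_singleton, Prod.mk.injEq, not_or] at hp
    rw [hω' l n]
    split_ifs with h1 h2
    · rcases h1 with ⟨rfl, rfl⟩ | ⟨rfl, rfl⟩ <;> tauto
    · rcases h2 with ⟨rfl, rfl⟩ | ⟨rfl, rfl⟩ <;> tauto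
    · rfl
  have hsum_s : ∀ f : Fin d × Fin d → ℝ,
      ∑ p ∈ ({(i0, i0), (i0, i1), (i1, i0), (i1, i1)} : Finset (Fin d × Fin d)), f p
        = f (i0, i0) + f (i0, i1) + f (i1, i0) + f (i1, i1) := by
    intro f
    rw [Finset.sum_insert (by simp [Prod.ext_iff, hne]),
      Finset.sum_insert (by simp [Prod.ext_iff, hne, hne.symm]),
      Finset.sum_insert (by simp [Prod.ext_iff, hne, hne.symm]),
      Finset.sum_singleton]
    ring
  have hsum_total : ∀ f : Fin d × Fin d → ℝ,
      (∀ p ∉ ({(i0, i0), (i0, i1), (i1, i0), (i1, i1)} : Finset (Fin d × Fin d)), f p = 0) →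
      ∑ p, f p = f (i0, i0) + f (i0, i1) + f (i1, i0) + f (i1, i1) := by
    intro f hf
    rw [← Finset.sum_subset (Finset.subset_univ _) (fun p _ hp => hf p hp), hsum_s]
  -- values of ω on the support
  have hv00 : ω (i0, i0) = (1 + x) / 4 := by rw [hω']; simp
  have hv11 : ω (i1, i1) = (1 + x) / 4 := by rw [hω']; simp
  have hv01 : ω (i0, i1) = (1 - x) / 4 := by rw [hω']; simp [hne, hne.symm]
  have hv10 : ω (i1, i0) = (1 - x) / 4 := by rw [hω']; simp [hne, hne.symm]
  -- sum equals 1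
  have hsum1 : (∑ p, ω p) = 1 := by
    rw [hsum_total ω hzero, hv00, hv01, hv10, hv11]; ring
  -- etabar values
  have hdR : (3 : ℝ) ≤ (d : ℝ) := by exact_mod_cast hd3
  have hd1R : (d : ℝ) - 1 ≠ 0 := by linarith
  have hcast : ((d - 1 : ℕ) : ℝ) = (d : ℝ) - 1 := by
    rw [Nat.cast_sub (by omega), Nat.cast_one]
  have he0 : etabar d i0 = -1 := by
    rw [etabar, show ((i0 : ℕ) : ℝ) = 0 by rw [hi0]; norm_num]
    field_simp
    ring
  have he1 : etabar d i1 = 1 := by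
    rw [etabar, show ((i1 : ℕ) : ℝ) = (d : ℝ) - 1 by rw [hi1, hcast]]
    field_simp
    ring
  -- QFI
  have hQ : QFId d ω = 8 * (1 + x) := by
    have h1 : (∑ l, ∑ n, ω (l, n) * (etabar d l + etabar d n) ^ 2) = 2 * (1 + x) := by
      rw [← Fintype.sum_prod_type']
      rw [hsum_total (fun p => ω (p.1, p.2) * (etabar d p.1 + etabar d p.2) ^ 2)
        (fun p hp => by simp only [Prod.mk.eta]; rw [hzero p hp]; ring)]
      simp only [he0, he1, hv00, hv01, hv10, hv11]
      ring
    have h2 : (∑ l, ∑ n, ω (l, n) * (etabar d l + etabar d n)) = 0 := by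
      rw [← Fintype.sum_prod_type']
      rw [hsum_total (fun p => ω (p.1, p.2) * (etabar d p.1 + etabar d p.2))
        (fun p hp => by simp only [Prod.mk.eta]; rw [hzero p hp]; ring)]
      simp only [he0, he1, hv00, hv01, hv10, hv11]
      ring
    rw [QFId, h1, h2]
    ring
  -- Schmidt coefficients matrix
  have ha2 : Real.sqrt ((1 + x) / 4) * Real.sqrt ((1 + x) / 4) = (1 + x) / 4 :=
    Real.mul_self_sqrt (by linarith)
  have hb2 : Real.sqrt ((1 - x) / 4) * Real.sqrt ((1 - x) / 4) = (1 - x) / 4 :=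
    Real.mul_self_sqrt (by linarith)
  have hab : Real.sqrt ((1 + x) / 4) * Real.sqrt ((1 - x) / 4) = (1 - 2*G) / 4 := by
    rw [← Real.sqrt_mul (show (0:ℝ) ≤ (1 + x) / 4 by linarith) ((1 - x) / 4)]
    rw [show (1 + x) / 4 * ((1 - x) / 4) = ((1 - 2*G) / 4) ^ 2 by
      linear_combination (-1/16 : ℝ) * hx2]
    exact Real.sqrt_sq (by linarith)
  have hA : Amat d ω = Real.sqrt ((1 + x) / 4) • (Matrix.single i0 i0 (1:ℝ) + Matrix.single i1 i1 1)
      + Real.sqrt ((1 - x) / 4) • (Matrix.single i0 i1 1 + Matrix.single i1 i0 1) :=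
    amat_eq d i0 i1 hne ((1 + x) / 4) ((1 - x) / 4) ω hω'
  have hM : (Amat d ω)ᵀ * Amat d ω
      = ((1:ℝ)/2) • (Matrix.single i0 i0 (1:ℝ) + Matrix.single i1 i1 1)
      + ((1 - 2*G)/2) • (Matrix.single i0 i1 1 + Matrix.single i1 i0 1) :=
    gram_eq d i0 i1 hne _ _ ((1:ℝ)/2) ((1 - 2*G)/2)
      (by linear_combination ha2 + hb2) (by linear_combination 2 * hab) _ hA
  have hkey : ((Amat d ω)ᵀ * Amat d ω) * ((Amat d ω)ᵀ * Amat d ω) * ((Amat d ω)ᵀ * Amat d ω)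
      = ((Amat d ω)ᵀ * Amat d ω) * ((Amat d ω)ᵀ * Amat d ω)
        - (G * (1 - G)) • ((Amat d ω)ᵀ * Amat d ω) :=
    cubic_eq d i0 i1 hne G _ hM
  -- each eigenvalue is a root of t(t-G)(t-(1-G))
  have hroot : ∀ i : Fin d, gramEig d ω i = 0 ∨ gramEig d ω i = G ∨ gramEig d ω i = 1 - G := by
    intro i
    set μ : ℝ := gramEig d ω i with hμ
    have hv : ((Amat d ω)ᵀ * Amat d ω) *ᵥ ⇑((gram_isHermitian d ω).eigenvectorBasis i)
        = μ • ⇑((gram_isHermitian d ω).eigenvectorBasis i) :=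
      (gram_isHermitian d ω).mulVec_eigenvectorBasis i
    set v : Fin d → ℝ := ⇑((gram_isHermitian d ω).eigenvectorBasis i) with hvdef
    have hv0 : v ≠ 0 := by
      intro h
      exact ((gram_isHermitian d ω).eigenvectorBasis.orthonormal.ne_zero i)
        (by ext j; exact congrFun h j)
    have e2 : (((Amat d ω)ᵀ * Amat d ω) * ((Amat d ω)ᵀ * Amat d ω)) *ᵥ v = (μ * μ) • v := by
      rw [← Matrix.mulVec_mulVec, hv, Matrix.mulVec_smul, hv, smul_smul]
    have e3 : (((Amat d ω)ᵀ * Amat d ω) * ((Amat d ω)ᵀ * Amat d ω) * ((Amat d ω)ᵀ * Amat d ω)) *ᵥ v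
        = (μ * (μ * μ)) • v := by
      rw [← Matrix.mulVec_mulVec, hv, Matrix.mulVec_smul, e2, smul_smul]
    rw [hkey, Matrix.sub_mulVec, e2, Matrix.smul_mulVec, hv, smul_smul] at e3
    have e4 : (μ * (μ * μ) - (μ * μ) + G * (1 - G) * μ) • v = 0 := by
      rw [add_smul, sub_smul, ← e3]
      module
    have e5 : μ * (μ * μ) - (μ * μ) + G * (1 - G) * μ = 0 :=
      (smul_eq_zero.mp e4).resolve_right hv0
    have e6 : μ * ((μ - G) * (μ - (1 - G))) = 0 := by linear_combination e5
    rcases mul_eq_zero.mp e6 with h | h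
    · exact Or.inl h
    · rcases mul_eq_zero.mp h with h' | h'
      · exact Or.inr (Or.inl (by linarith [sub_eq_zero.mp h']))
      · exact Or.inr (Or.inr (by linarith [sub_eq_zero.mp h']))
  have hle : ∀ i, gramEig d ω i ≤ 1 - G := by
    intro i; rcases hroot i with h | h | h <;> linarith
  -- 1 - G is attained
  have hEig : ∃ i, gramEig d ω i = 1 - G := by
    set u : Fin d → ℝ := Pi.single i0 1 + Pi.single i1 1 with hu
    have hMu : ((Amat d ω)ᵀ * Amat d ω) *ᵥ u = (1 - G) • u :=
      mulvec_top d i0 i1 hne G _ hM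
    have hu0 : u ≠ 0 := by
      intro h
      have h1 : u i0 = 0 := by rw [h]; rfl
      rw [hu] at h1
      simp [Pi.single_apply, hne, hne.symm] at h1
    have hmem : (1 - G) ∈ spectrum ℝ ((Amat d ω)ᵀ * Amat d ω) := by
      rw [← Matrix.spectrum_toEuclideanLin (𝕜 := ℝ)]
      apply Module.End.HasEigenvalue.mem_spectrum (μ := 1 - G)
      apply Module.End.hasEigenvalue_of_hasEigenvector
        (x := WithLp.toLp 2 u)
      constructor
      · rw [Module.End.mem_eigenspace_iff, Matrix.toEuclideanLin_apply_piLp_toLp,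
          hMu, WithLp.toLp_smul]
      · intro h
        apply hu0
        have := congrArg (WithLp.equiv 2 (Fin d → ℝ)) h
        simpa using this
    rw [(gram_isHermitian d ω).spectrum_real_eq_range_eigenvalues] at hmem
    obtain ⟨i, hi⟩ := hmem
    exact ⟨i, hi⟩
  have hGGM : GGMd d ω = G := by
    obtain ⟨i, hi⟩ := hEig
    haveI : Nonempty (Fin d) := ⟨i0⟩
    have hsup : (⨆ i, gramEig d ω i) = 1 - G := by
      apply le_antisymm
      · exact ciSup_le hle
      · rw [← hi]; exact le_ciSup (Set.Finite.bddAbove (Set.finite_range _)) i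
    rw [GGMd, hsup]; ring
  exact ⟨hnn, hsum1, hGGM, hQ, by rw [hQ, hx]⟩
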